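/- Let X = [−1,1]²_ℤ ⊆ ℤ² with 8-adjacency (c₂-adjacency) and Y = X \ {(0,0)}. Then the multivalued function r : X ⊸ Y defined by r((0,0)) = Y and r(x) = {x} for x ∈ Y is a connectivity preserving multivalued retraction of X onto Y. -/

import Mathlib

/-- A subset `A` is connected under adjacency `adj`: any two of its points are
joined by a path of consecutively adjacent points lying in `A`. -/
def ConnIn {X : Type*} (adj : X → X → Prop) (A : Set X) : Prop :=
  ∀ a ∈ A, ∀ b ∈ A,
    Relation.ReflTransGen (fun u v => adj u v ∧ u ∈ A ∧ v ∈ A) a b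

/-- Two subsets are adjacent if they contain points that are equal or adjacent. -/
def AdjSets {X : Type*} (adj : X → X → Prop) (A B : Set X) : Prop :=
  ∃ a ∈ A, ∃ b ∈ B, a = b ∨ adj a b

/-- Image of a set under a multivalued function. -/
def imageMV {X Y : Type*} (F : X → Set Y) (A : Set X) : Set Y :=
  ⋃ x ∈ A, F x

/-- A multivalued function is connectivity preserving if images of connected
sets are connected. -/
def ConnPres {X Y : Type*} (adjX : X → X → Prop) (adjY : Y → Y → Prop)
    (F : X → Set Y) : Prop :=
  ∀ A : Set X, ConnIn adjX A → ConnIn adjY (imageMV F A)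

/-- 8-adjacency on `ℤ²`: distinct points differing by at most 1 in each
coordinate. -/
def adj8 (p q : ℤ × ℤ) : Prop :=
  p ≠ q ∧ |p.1 - q.1| ≤ 1 ∧ |p.2 - q.2| ≤ 1

/-- 4-adjacency on `ℤ²`. -/
def adj4 (p q : ℤ × ℤ) : Prop :=
  (|p.1 - q.1| = 1 ∧ p.2 = q.2) ∨ (p.1 = q.1 ∧ |p.2 - q.2| = 1)

/-- The punctured square. -/
def Yset : Set (ℤ × ℤ) :=
  {p | p.1 ∈ Set.Icc (-1 : ℤ) 1 ∧ p.2 ∈ Set.Icc (-1 : ℤ) 1} \ {(0, 0)}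

lemma stepY (a b c d : ℤ)
    (h : (¬(a = c ∧ b = d) ∧ |a - c| ≤ 1 ∧ |b - d| ≤ 1) ∧
      (-1 ≤ a ∧ a ≤ 1 ∧ -1 ≤ b ∧ b ≤ 1 ∧ ¬(a = 0 ∧ b = 0)) ∧
      (-1 ≤ c ∧ c ≤ 1 ∧ -1 ≤ d ∧ d ≤ 1 ∧ ¬(c = 0 ∧ d = 0))) :
    adj8 (a, b) (c, d) ∧ ((a, b) : ℤ × ℤ) ∈ Yset ∧ ((c, d) : ℤ × ℤ) ∈ Yset := by
  obtain ⟨⟨hne, h1, h2⟩, ⟨u1, u2, u3, u4, un⟩, ⟨v1, v2, v3, v4, vn⟩⟩ := h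
  refine ⟨⟨?_, h1, h2⟩, ⟨⟨⟨u1, u2⟩, u3, u4⟩, ?_⟩, ⟨⟨⟨v1, v2⟩, v3, v4⟩, ?_⟩⟩
  · intro he
    exact hne (by simpa [Prod.ext_iff] using he)
  · intro he
    exact un (by simpa [Prod.ext_iff] using he)
  · intro he
    exact vn (by simpa [Prod.ext_iff] using he)

lemma reachHub : ∀ y ∈ Yset,
    Relation.ReflTransGen (fun u v => adj8 u v ∧ u ∈ Yset ∧ v ∈ Yset) y (1, 1) := by
  rintro ⟨a, b⟩ ⟨⟨⟨h1, h2⟩, h3, h4⟩, hne⟩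
  simp only [Set.mem_singleton_iff, Prod.mk.injEq, not_and] at hne
  interval_cases a <;> interval_cases b
  · exact .head (stepY (-1) (-1) 0 (-1) (by decide))
      (.head (stepY 0 (-1) 1 0 (by decide))
        (.head (stepY 1 0 1 1 (by decide)) .refl))
  · exact .head (stepY (-1) 0 0 1 (by decide))
      (.head (stepY 0 1 1 1 (by decide)) .refl)
  · exact .head (stepY (-1) 1 0 1 (by decide))
      (.head (stepY 0 1 1 1 (by decide)) .refl)
  · exact .head (stepY 0 (-1) 1 0 (by decide))
      (.head (stepY 1 0 1 1 (by decide)) .refl)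
  · exact absurd rfl (hne rfl)
  · exact .head (stepY 0 1 1 1 (by decide)) .refl
  · exact .head (stepY 1 (-1) 1 0 (by decide))
      (.head (stepY 1 0 1 1 (by decide)) .refl)
  · exact .head (stepY 1 0 1 1 (by decide)) .refl
  · exact .refl

lemma connY : ConnIn adj8 Yset := by
  intro a ha b hb
  have hsymm : Symmetric (fun u v => adj8 u v ∧ u ∈ Yset ∧ v ∈ Yset) := by
    rintro u v ⟨⟨hne, hu1, hu2⟩, hu, hv⟩
    exact ⟨⟨hne.symm, by rwa [abs_sub_comm], by rwa [abs_sub_comm]⟩, hv, hu⟩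
  exact (reachHub a ha).trans (by haveI : Std.Symm (fun u v => adj8 u v ∧ u ∈ Yset ∧ v ∈ Yset) := ⟨hsymm⟩; exact Std.Symm.symm _ _ (reachHub b hb))

theorem square_minus_center_retraction :
    let X : Set (ℤ × ℤ) :=
      {p | p.1 ∈ Set.Icc (-1 : ℤ) 1 ∧ p.2 ∈ Set.Icc (-1 : ℤ) 1}
    let Y : Set (ℤ × ℤ) := X \ {(0, 0)}
    let r : ℤ × ℤ → Set (ℤ × ℤ) := fun p =>
      {z | (p = (0, 0) ∧ z ∈ Y) ∨ (p ≠ (0, 0) ∧ z = p)}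
    (∀ y ∈ Y, r y = {y}) ∧
    (∀ x ∈ X, r x ⊆ Y) ∧
    (∀ A : Set (ℤ × ℤ), A ⊆ X → ConnIn adj8 A →
      ConnIn adj8 (imageMV r A)) := by
  intro X Y r
  refine ⟨?_, ?_, ?_⟩
  · intro y hy
    have hy0 : y ≠ (0, 0) := hy.2
    ext z
    simp only [r, Set.mem_setOf_eq, Set.mem_singleton_iff]
    constructor
    · rintro (⟨h, _⟩ | ⟨_, h⟩)
      · exact absurd h hy0
      · exact h
    · intro h
      exact Or.inr ⟨hy0, h⟩
  · intro x hx z hz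
    rcases hz with ⟨_, hzY⟩ | ⟨hx0, rfl⟩
    · exact hzY
    · exact ⟨hx, hx0⟩
  · intro A hAX hA
    by_cases h0 : (0, 0) ∈ A
    · have himg : imageMV r A = Yset := by
        ext z
        simp only [imageMV, Set.mem_iUnion, exists_prop, r, Set.mem_setOf_eq]
        constructor
        · rintro ⟨x, hxA, ⟨_, hzY⟩ | ⟨hx0, rfl⟩⟩
          · exact hzY
          · exact ⟨hAX hxA, hx0⟩
        · intro hz
          exact ⟨(0, 0), h0, Or.inl ⟨rfl, hz⟩⟩
      rw [himg]
      exact connY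
    · have himg : imageMV r A = A := by
        ext z
        simp only [imageMV, Set.mem_iUnion, exists_prop, r, Set.mem_setOf_eq]
        constructor
        · rintro ⟨x, hxA, ⟨hx0, _⟩ | ⟨_, rfl⟩⟩
          · exact absurd (hx0 ▸ hxA) h0
          · exact hxA
        · intro hz
          exact ⟨z, hz, Or.inr ⟨fun he => h0 (he ▸ hz), rfl⟩⟩
      rw [himg]
      exact hA
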